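/- Let s ≥ 1 and let G ≤ Aut(T) be a group that does not stabilise the vertex 0 (i.e. some element of G moves the vertex 0). Then β_i([G,G]) ≤ N_i for every i ∈ {1,…,s−1}, where N_i is the normal closure in Bas_s(G) of ⟨β_j(G) : j ≠ i⟩. In particular, if s > 1 and G is s-split, then G is abelian. -/

import Mathlib

/-!
Groups of automorphisms of the `m`-regular rooted tree, encoded via portraits:
an automorphism is determined by the family of its labels (local actions)
`label : List (Fin m) → Equiv.Perm (Fin m)`.
-/

namespace Basilica

/-- An automorphism of the `m`-regular rooted tree, given by its portrait. -/
structure TreeAut (m : ℕ) where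
  label : List (Fin m) → Equiv.Perm (Fin m)

namespace TreeAut

variable {m : ℕ}

lemma ext_label {a b : TreeAut m} (h : ∀ u, a.label u = b.label u) : a = b := by
  cases a
  cases b
  simp only [mk.injEq]
  exact funext h

/-- The section of an automorphism at a vertex. -/
def sec (a : TreeAut m) (v : List (Fin m)) : TreeAut m := ⟨fun u => a.label (v ++ u)⟩

@[simp] lemma sec_label (a : TreeAut m) (v u : List (Fin m)) :
    (a.sec v).label u = a.label (v ++ u) := rfl

@[simp] lemma sec_nil (a : TreeAut m) : a.sec [] = a := rfl

lemma sec_sec (a : TreeAut m) (v w : List (Fin m)) : (a.sec v).sec w = a.sec (v ++ w) :=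
  ext_label fun u => by simp [List.append_assoc]

/-- The action of a tree automorphism on the vertices (finite words). -/
def apply : TreeAut m → List (Fin m) → List (Fin m)
  | _, [] => []
  | a, x :: u => a.label [] x :: (a.sec [x]).apply u

/-- The inverse action of a tree automorphism on the vertices. -/
def invApply : TreeAut m → List (Fin m) → List (Fin m)
  | _, [] => []
  | a, x :: u => (a.label [])⁻¹ x :: (a.sec [(a.label [])⁻¹ x]).invApply u

instance : One (TreeAut m) := ⟨⟨fun _ => 1⟩⟩
instance : Mul (TreeAut m) := ⟨fun a b => ⟨fun u => a.label (b.apply u) * b.label u⟩⟩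
instance : Inv (TreeAut m) := ⟨fun a => ⟨fun u => (a.label (a.invApply u))⁻¹⟩⟩

@[simp] lemma one_label (u : List (Fin m)) : (1 : TreeAut m).label u = 1 := rfl

@[simp] lemma mul_label (a b : TreeAut m) (u : List (Fin m)) :
    (a * b).label u = a.label (b.apply u) * b.label u := rfl

@[simp] lemma inv_label (a : TreeAut m) (u : List (Fin m)) :
    a⁻¹.label u = (a.label (a.invApply u))⁻¹ := rfl

@[simp] lemma one_sec (v : List (Fin m)) : (1 : TreeAut m).sec v = 1 := rfl

@[simp] lemma apply_nil (a : TreeAut m) : a.apply [] = [] := rfl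

lemma apply_cons (a : TreeAut m) (x : Fin m) (u : List (Fin m)) :
    a.apply (x :: u) = a.label [] x :: (a.sec [x]).apply u := rfl

@[simp] lemma one_apply (u : List (Fin m)) : (1 : TreeAut m).apply u = u := by
  induction u with
  | nil => rfl
  | cons x u ih => simp [apply_cons, ih]

lemma apply_append (a : TreeAut m) (v u : List (Fin m)) :
    a.apply (v ++ u) = a.apply v ++ (a.sec v).apply u := by
  induction v generalizing a with
  | nil => simp
  | cons x v ih =>
      simp only [List.cons_append, apply_cons, ih, sec_sec, List.singleton_append,
        List.nil_append]

lemma mul_sec (a b : TreeAut m) (v : List (Fin m)) :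
    (a * b).sec v = a.sec (b.apply v) * b.sec v :=
  ext_label fun u => by simp [apply_append]

lemma mul_apply (a b : TreeAut m) (u : List (Fin m)) :
    (a * b).apply u = a.apply (b.apply u) := by
  induction u generalizing a b with
  | nil => rfl
  | cons x u ih =>
      rw [apply_cons, mul_sec, ih]
      simp [apply_cons, Equiv.Perm.mul_apply]

lemma invApply_apply (a : TreeAut m) (u : List (Fin m)) : a.invApply (a.apply u) = u := by
  induction u generalizing a with
  | nil => rfl
  | cons x u ih => simp [apply_cons, invApply, ih]

lemma apply_invApply (a : TreeAut m) (u : List (Fin m)) : a.apply (a.invApply u) = u := by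
  induction u generalizing a with
  | nil => rfl
  | cons x u ih => simp [invApply, apply_cons, ih]

instance : Group (TreeAut m) where
  mul_assoc a b c := ext_label fun u => by simp [mul_apply, mul_assoc]
  one_mul a := ext_label fun u => by simp
  mul_one a := ext_label fun u => by simp
  inv_mul_cancel a := ext_label fun u => by simp [invApply_apply]

lemma apply_injective (a : TreeAut m) : Function.Injective a.apply := by
  intro x y h
  have hx := invApply_apply a x
  rw [h, invApply_apply] at hx
  exact hx.symm

@[simp] lemma apply_length (a : TreeAut m) (u : List (Fin m)) :
    (a.apply u).length = u.length := by
  induction u generalizing a with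
  | nil => rfl
  | cons x u ih => simp [apply_cons, ih]

/-- `cons ρ f` is `ρ · ψ₁⁻¹(f 0, …, f (m-1))`: the automorphism with root label `ρ`
and first-layer sections `f x`. -/
def cons (ρ : Equiv.Perm (Fin m)) (f : Fin m → TreeAut m) : TreeAut m :=
  ⟨fun u =>
    match u with
    | [] => ρ
    | x :: v => (f x).label v⟩

end TreeAut

variable {m : ℕ}

/-- The `n`-th layer stabiliser `St_G(n)` of a group `G` of tree automorphisms. -/
def layerStab (G : Subgroup (TreeAut m)) (n : ℕ) : Subgroup (TreeAut m) where
  carrier := {g | g ∈ G ∧ ∀ u : List (Fin m), u.length = n → g.apply u = u}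
  one_mem' := ⟨G.one_mem, fun u _ => TreeAut.one_apply u⟩
  mul_mem' := by
    rintro a b ⟨haG, ha⟩ ⟨hbG, hb⟩
    refine ⟨G.mul_mem haG hbG, fun u hu => ?_⟩
    rw [TreeAut.mul_apply, hb u hu, ha u hu]
  inv_mem' := by
    rintro a ⟨haG, ha⟩
    refine ⟨G.inv_mem haG, fun u hu => ?_⟩
    apply TreeAut.apply_injective a
    rw [← TreeAut.mul_apply, mul_inv_cancel, TreeAut.one_apply, ha u hu]

/-- A group of tree automorphisms acts spherically transitively if it acts
transitively on every layer. -/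
def SphericallyTransitive (G : Subgroup (TreeAut m)) : Prop :=
  ∀ u v : List (Fin m), u.length = v.length → ∃ g ∈ G, g.apply u = v

/-- A group of tree automorphisms is self-similar if it is closed under sections. -/
def SelfSimilar (G : Subgroup (TreeAut m)) : Prop :=
  ∀ g ∈ G, ∀ v : List (Fin m), g.sec v ∈ G

/-- A spherically transitive group is fractal if `st_G(u)|_u = G` for all vertices `u`. -/
def Fractal (G : Subgroup (TreeAut m)) : Prop :=
  SphericallyTransitive G ∧
    ∀ u : List (Fin m),
      {h : TreeAut m | ∃ g ∈ G, g.apply u = u ∧ g.sec u = h} = (G : Set (TreeAut m))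

/-- A spherically transitive group is strongly fractal if `St_G(1)|_x = G` for all `x ∈ X`. -/
def StronglyFractal (G : Subgroup (TreeAut m)) : Prop :=
  SphericallyTransitive G ∧
    ∀ x : Fin m,
      {h : TreeAut m | ∃ g ∈ layerStab G 1, g.sec [x] = h} = (G : Set (TreeAut m))

/-- A spherically transitive group is very strongly fractal if
`St_G(n+1)|_x = St_G(n)` for all `n` and `x ∈ X`. -/
def VeryStronglyFractal (G : Subgroup (TreeAut m)) : Prop :=
  SphericallyTransitive G ∧
    ∀ (n : ℕ) (x : Fin m),
      {h : TreeAut m | ∃ g ∈ layerStab G (n + 1), g.sec [x] = h}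
        = (layerStab G n : Set (TreeAut m))

/-- A group of tree automorphisms is contracting if it has a finite nucleus. -/
def Contracting (G : Subgroup (TreeAut m)) : Prop :=
  ∃ N : Set (TreeAut m), N.Finite ∧ N ⊆ (G : Set (TreeAut m)) ∧
    ∀ g ∈ G, ∃ k : ℕ, ∀ v : List (Fin m), k < v.length → g.sec v ∈ N

/-- A tree automorphism is finite-state if it has finitely many distinct sections. -/
def FiniteState (f : TreeAut m) : Prop :=
  {h : TreeAut m | ∃ u : List (Fin m), f.sec u = h}.Finite

/-- A tree automorphism is bounded if the number of nontrivial sections at the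
`n`-th layer is bounded uniformly in `n`. -/
def BoundedAut (f : TreeAut m) : Prop :=
  ∃ C : ℕ, ∀ n : ℕ, {u : List (Fin m) | u.length = n ∧ f.sec u ≠ 1}.ncard ≤ C

/-- The `n`-th rigid layer stabiliser: the subgroup generated by the rigid vertex
stabilisers of the vertices of the `n`-th layer. -/
def rigidLayerStab (G : Subgroup (TreeAut m)) (n : ℕ) : Subgroup (TreeAut m) :=
  Subgroup.closure {g | g ∈ G ∧ ∃ v : List (Fin m), v.length = n ∧
    ∀ u : List (Fin m), ¬ v <+: u → g.apply u = u}

/-- A weakly branch group: spherically transitive with nontrivial rigid layer stabilisers. -/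
def WeaklyBranch (G : Subgroup (TreeAut m)) : Prop :=
  SphericallyTransitive G ∧ ∀ n : ℕ, rigidLayerStab G n ≠ ⊥

/-- `H` is weakly regular branch over `K ≤ H` if `ψ₁(St_K(1)) ⊇ K × ⋯ × K`. -/
def WeaklyRegularBranchOver (H K : Subgroup (TreeAut m)) : Prop :=
  K ≤ H ∧ ∀ f : Fin m → TreeAut m, (∀ x, f x ∈ K) → TreeAut.cons 1 f ∈ K

/-- The portrait of the `i`-th Basilica monomorphism `β^s_i` applied to `g`,
computed by recursion over vertices. -/
def betaLabel [NeZero m] (s : ℕ) : List (Fin m) → ℕ → TreeAut m → Equiv.Perm (Fin m)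
  | [], i, g => if i = 0 then g.label [] else 1
  | x :: u, i, g =>
      if i = 0 then betaLabel s u (s - 1) (g.sec [x])
      else if x = 0 then betaLabel s u (i - 1) g else 1

/-- The Basilica monomorphism `β^s_i : Aut(T) → Aut(T)`, satisfying
`β_i(g) = ψ₁⁻¹(β_{i-1}(g), 1, …, 1)` for `1 ≤ i ≤ s-1` and
`β_0(g) = g|^ε · ψ₁⁻¹(β_{s-1}(g|_0), …, β_{s-1}(g|_{m-1}))`. -/
def betaAut [NeZero m] (s i : ℕ) (g : TreeAut m) : TreeAut m := ⟨fun u => betaLabel s u i g⟩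

/-- The `s`-th Basilica group of `G`. -/
def basilica [NeZero m] (s : ℕ) (G : Subgroup (TreeAut m)) : Subgroup (TreeAut m) :=
  Subgroup.closure {b | ∃ g ∈ G, ∃ i < s, b = betaAut s i g}

/-- The subgroup `S_i = ⟨β_j(G) : j ≠ i⟩` of the `s`-th Basilica group. -/
def Ssub [NeZero m] (s i : ℕ) (G : Subgroup (TreeAut m)) : Subgroup (TreeAut m) :=
  Subgroup.closure {b | ∃ g ∈ G, ∃ j < s, j ≠ i ∧ b = betaAut s j g}

/-- The normal closure `N_i` of `S_i` in the `s`-th Basilica group of `G`. -/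
def Nsub [NeZero m] (s i : ℕ) (G : Subgroup (TreeAut m)) : Subgroup (TreeAut m) :=
  Subgroup.closure {x | ∃ b ∈ basilica s G, ∃ y ∈ Ssub s i G, x = b * y * b⁻¹}

/-- The `i`-th splitting kernel `K_i = β_i⁻¹(β_i(G) ∩ N_i)` of `G`, as a set. -/
def Kset [NeZero m] (s i : ℕ) (G : Subgroup (TreeAut m)) : Set (TreeAut m) :=
  {g | g ∈ G ∧ betaAut s i g ∈ Nsub s i G}

/-- The portrait of the monomorphism `π_i` (for the `d`-fold diagonal construction). -/
def piLabel (d : ℕ) : List (Fin m) → ℕ → TreeAut m → Equiv.Perm (Fin m)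
  | [], i, g => if i = 0 then g.label [] else 1
  | x :: u, i, g =>
      if i = 0 then piLabel d u (d - 1) (g.sec [x])
      else piLabel d u (i - 1) g

/-- The monomorphism `π_i : Aut(T) → Aut(T)`, satisfying
`π_0(g) = g|^ε · ψ₁⁻¹(π_{d-1}(g|_0), …, π_{d-1}(g|_{m-1}))` and
`π_i(g) = ψ₁⁻¹(π_{i-1}(g), …, π_{i-1}(g))` for `1 ≤ i ≤ d-1`. -/
def piAut (d i : ℕ) (g : TreeAut m) : TreeAut m := ⟨fun u => piLabel d u i g⟩

/-- The generator of the `m`-adic odometer: `a = σ · ψ₁⁻¹(a, 1, …, 1)` with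
`σ = (0 1 … m-1)`. -/
def odometer (m : ℕ) [NeZero m] : TreeAut m :=
  ⟨fun u => if ∀ x ∈ u, x = 0 then finRotate m else 1⟩

/-- The group `O_m^d = D_d(O_m) = ⟨π_i(a) : 0 ≤ i ≤ d-1⟩`. -/
def OdPow (m d : ℕ) [NeZero m] : Subgroup (TreeAut m) :=
  Subgroup.closure {x | ∃ i < d, x = piAut d i (odometer m)}

/-- The group `Γ` of all automorphisms all of whose labels are powers of the
cycle `σ = (0 1 … m-1)`. -/
def Gamma (m : ℕ) : Subgroup (TreeAut m) where
  carrier := {g | ∀ u : List (Fin m), g.label u ∈ Subgroup.zpowers (finRotate m)}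
  one_mem' := by
    intro u
    rw [TreeAut.one_label]
    exact one_mem _
  mul_mem' := by
    intro a b ha hb u
    rw [TreeAut.mul_label]
    exact mul_mem (ha _) (hb _)
  inv_mem' := by
    intro a ha u
    rw [TreeAut.inv_label]
    exact inv_mem (ha _)

/-- The Hausdorff dimension of `G ≤ Γ` relative to `Γ`. -/
noncomputable def hdim (m : ℕ) (G : Subgroup (TreeAut m)) : ℝ :=
  Filter.liminf (fun n : ℕ =>
    Real.logb m ((layerStab G n).relIndex G) /
      Real.logb m ((layerStab (Gamma m) n).relIndex (Gamma m))) Filter.atTop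

/-- The series of obstructions `o_G(n) = m·log_m|L_G(n-1)| - log_m|L_G(n)|` (for `n ≥ 1`),
where `L_G(n) = St_G(n)/St_G(n+1)`. -/
noncomputable def obstruction (m : ℕ) (G : Subgroup (TreeAut m)) (n : ℕ) : ℝ :=
  m * Real.logb m ((layerStab G n).relIndex (layerStab G (n - 1)))
    - Real.logb m ((layerStab G (n + 1)).relIndex (layerStab G n))

/-- The permutation group induced by `G` on the first layer acts regularly on `X`. -/
def RegularRootAction (G : Subgroup (TreeAut m)) : Prop :=
  (∀ x y : Fin m, ∃ g ∈ G, g.label [] x = y) ∧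
    ∀ g ∈ G, ∀ x : Fin m, g.label [] x = x → g.label [] = 1


/-! ### Auxiliary development for Statement 8 -/

open scoped commutatorElement

section Statement8Aux

variable {m : ℕ}

lemma TreeAut.eq_one_of_label {a : TreeAut m} (h : ∀ u, a.label u = 1) : a = 1 :=
  TreeAut.ext_label fun u => by rw [h, TreeAut.one_label]

lemma TreeAut.invApply_nil (a : TreeAut m) : a.invApply [] = [] := rfl

lemma TreeAut.inv_label_nil (a : TreeAut m) : a⁻¹.label [] = (a.label [])⁻¹ := rfl

variable [NeZero m]

@[simp] lemma betaAut_label (s i : ℕ) (g : TreeAut m) (u : List (Fin m)) :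
    (betaAut s i g).label u = betaLabel s u i g := rfl

lemma betaLabel_nil (s i : ℕ) (g : TreeAut m) :
    betaLabel s ([] : List (Fin m)) i g = if i = 0 then g.label [] else 1 := rfl

lemma betaLabel_cons (s i : ℕ) (x : Fin m) (u : List (Fin m)) (g : TreeAut m) :
    betaLabel s (x :: u) i g =
      if i = 0 then betaLabel s u (s - 1) (g.sec [x])
      else if x = 0 then betaLabel s u (i - 1) g else 1 := rfl

lemma betaLabel_cons_zero (s : ℕ) (x : Fin m) (u : List (Fin m)) (g : TreeAut m) :
    betaLabel s (x :: u) 0 g = betaLabel s u (s - 1) (g.sec [x]) := by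
  rw [betaLabel_cons, if_pos rfl]

lemma betaLabel_cons_ne (s i : ℕ) (hi : i ≠ 0) (x : Fin m) (u : List (Fin m))
    (g : TreeAut m) :
    betaLabel s (x :: u) i g = if x = 0 then betaLabel s u (i - 1) g else 1 := by
  rw [betaLabel_cons, if_neg hi]

lemma betaLabel_one (s : ℕ) (u : List (Fin m)) (i : ℕ) :
    betaLabel s u i (1 : TreeAut m) = 1 := by
  induction u generalizing i with
  | nil => rw [betaLabel_nil]; split_ifs <;> simp
  | cons x u ih => rw [betaLabel_cons]; split_ifs <;> simp [ih]

lemma betaAut_sec_zero (s : ℕ) (g : TreeAut m) (x : Fin m) :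
    (betaAut s 0 g).sec [x] = betaAut s (s - 1) (g.sec [x]) :=
  TreeAut.ext_label fun u => by
    rw [TreeAut.sec_label, List.singleton_append, betaAut_label, betaAut_label,
      betaLabel_cons_zero]

lemma betaAut_sec_of_ne (s i : ℕ) (hi : i ≠ 0) (g : TreeAut m) (x : Fin m) (hx : x ≠ 0) :
    (betaAut s i g).sec [x] = 1 :=
  TreeAut.eq_one_of_label fun u => by
    rw [TreeAut.sec_label, List.singleton_append, betaAut_label,
      betaLabel_cons_ne s i hi, if_neg hx]

lemma betaAut_sec_of_ne_zero (s i : ℕ) (hi : i ≠ 0) (g : TreeAut m) :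
    (betaAut s i g).sec [(0 : Fin m)] = betaAut s (i - 1) g :=
  TreeAut.ext_label fun u => by
    rw [TreeAut.sec_label, List.singleton_append, betaAut_label, betaAut_label,
      betaLabel_cons_ne s i hi, if_pos rfl]

lemma betaAut_label_nil_of_ne (s i : ℕ) (hi : i ≠ 0) (g : TreeAut m) :
    (betaAut s i g).label [] = 1 := by
  rw [betaAut_label, betaLabel_nil, if_neg hi]

lemma betaAut_label_nil_zero (s : ℕ) (g : TreeAut m) :
    (betaAut s 0 g).label [] = g.label [] := by
  rw [betaAut_label, betaLabel_nil, if_pos rfl]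

lemma betaLabel_mul (s : ℕ) (u : List (Fin m)) :
    ∀ (i : ℕ) (g h : TreeAut m),
      betaLabel s u i (g * h)
        = betaLabel s ((betaAut s i h).apply u) i g * betaLabel s u i h := by
  induction u with
  | nil =>
      intro i g h
      rw [TreeAut.apply_nil, betaLabel_nil, betaLabel_nil, betaLabel_nil]
      rcases eq_or_ne i 0 with rfl | hi
      · simp [TreeAut.mul_label]
      · simp [hi]
  | cons x u ih =>
      intro i g h
      rcases eq_or_ne i 0 with rfl | hi
      · have happ : (betaAut s 0 h).apply (x :: u)
            = h.label [] x :: (betaAut s (s - 1) (h.sec [x])).apply u := by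
          rw [TreeAut.apply_cons, betaAut_sec_zero, betaAut_label_nil_zero]
        rw [happ, betaLabel_cons_zero, betaLabel_cons_zero, betaLabel_cons_zero]
        have hsec : (g * h).sec [x] = g.sec [h.label [] x] * h.sec [x] := by
          rw [TreeAut.mul_sec, TreeAut.apply_cons, TreeAut.apply_nil]
        rw [hsec, ih]
      · rcases eq_or_ne x 0 with rfl | hx
        · have happ : (betaAut s i h).apply ((0 : Fin m) :: u)
              = (0 : Fin m) :: (betaAut s (i - 1) h).apply u := by
            rw [TreeAut.apply_cons, betaAut_sec_of_ne_zero s i hi,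
              betaAut_label_nil_of_ne s i hi]
            rfl
          rw [happ, betaLabel_cons_ne s i hi, betaLabel_cons_ne s i hi,
            betaLabel_cons_ne s i hi, if_pos rfl, if_pos rfl, if_pos rfl, ih]
        · have happ : (betaAut s i h).apply (x :: u) = x :: u := by
            rw [TreeAut.apply_cons, betaAut_sec_of_ne s i hi h x hx,
              betaAut_label_nil_of_ne s i hi, TreeAut.one_apply]
            rfl
          rw [happ, betaLabel_cons_ne s i hi, betaLabel_cons_ne s i hi,
            betaLabel_cons_ne s i hi, if_neg hx, if_neg hx, if_neg hx, one_mul]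

/-- The Basilica monomorphism as a monoid homomorphism. -/
def betaHom (s i : ℕ) : TreeAut m →* TreeAut m where
  toFun := betaAut s i
  map_one' := TreeAut.ext_label fun u => by
    rw [betaAut_label, betaLabel_one, TreeAut.one_label]
  map_mul' g h := TreeAut.ext_label fun u => by
    rw [betaAut_label, betaLabel_mul, TreeAut.mul_label, betaAut_label, betaAut_label]

/-- `f` is supported in the subtree at the first-layer vertex `x0`. -/
def SuppAt (x0 : Fin m) (f : TreeAut m) : Prop :=
  f.label [] = 1 ∧ ∀ (y : Fin m) (u : List (Fin m)), y ≠ x0 → f.label (y :: u) = 1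

lemma SuppAt.sec_eq_one {x0 : Fin m} {f : TreeAut m} (hf : SuppAt x0 f)
    {z : Fin m} (hz : z ≠ x0) : f.sec [z] = 1 :=
  TreeAut.eq_one_of_label fun u => by
    rw [TreeAut.sec_label, List.singleton_append]
    exact hf.2 z u hz

lemma SuppAt.apply_fix {x0 : Fin m} {f : TreeAut m} (hf : SuppAt x0 f)
    {z : Fin m} (hz : z ≠ x0) (v : List (Fin m)) : f.apply (z :: v) = z :: v := by
  rw [TreeAut.apply_cons, hf.sec_eq_one hz, TreeAut.one_apply, hf.1]
  rfl

lemma SuppAt.apply_cons_self {x0 : Fin m} {f : TreeAut m} (hf : SuppAt x0 f)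
    (v : List (Fin m)) : f.apply (x0 :: v) = x0 :: (f.sec [x0]).apply v := by
  rw [TreeAut.apply_cons, hf.1]
  rfl

lemma SuppAt.commute {x0 x1 : Fin m} (hne : x0 ≠ x1) {f f' : TreeAut m}
    (hf : SuppAt x0 f) (hf' : SuppAt x1 f') : f * f' = f' * f := by
  apply TreeAut.ext_label
  intro u
  match u with
  | [] =>
      rw [TreeAut.mul_label, TreeAut.mul_label, TreeAut.apply_nil, TreeAut.apply_nil,
        hf.1, hf'.1]
  | y :: v =>
      rcases eq_or_ne y x0 with rfl | hy0
      · rw [TreeAut.mul_label, TreeAut.mul_label, hf'.apply_fix hne v,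
          hf'.2 y v hne, hf.apply_cons_self, hf'.2 y _ hne, mul_one, one_mul]
      · rcases eq_or_ne y x1 with rfl | hy1
        · rw [TreeAut.mul_label, TreeAut.mul_label, hf.apply_fix hne.symm v,
            hf.2 y v hne.symm, hf'.apply_cons_self, hf.2 y _ hne.symm, mul_one, one_mul]
        · rw [TreeAut.mul_label, TreeAut.mul_label, hf.apply_fix hy0 v,
            hf'.apply_fix hy1 v, hf.2 y v hy0, hf'.2 y v hy1]

lemma SuppAt.conj {x0 : Fin m} {f : TreeAut m} (hf : SuppAt x0 f) (e : TreeAut m) :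
    SuppAt (e.label [] x0) (e * f * e⁻¹) := by
  constructor
  · rw [TreeAut.mul_label, TreeAut.mul_label, TreeAut.apply_nil, TreeAut.apply_nil,
      hf.1, TreeAut.inv_label_nil]
    simp
  · intro y u hy
    have hz : e⁻¹.label [] y ≠ x0 := by
      intro hcon
      apply hy
      rw [← hcon, TreeAut.inv_label_nil, ← Equiv.Perm.mul_apply, mul_inv_cancel, Equiv.Perm.one_apply]
    obtain ⟨z, v, hw, hzx⟩ : ∃ z v, e⁻¹.apply (y :: u) = z :: v ∧ z ≠ x0 :=
      ⟨_, _, TreeAut.apply_cons _ _ _, hz⟩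
    calc (e * f * e⁻¹).label (y :: u)
        = e.label (f.apply (e⁻¹.apply (y :: u)))
            * (f.label (e⁻¹.apply (y :: u)) * e⁻¹.label (y :: u)) := by
          rw [mul_assoc, TreeAut.mul_label, TreeAut.mul_label, TreeAut.mul_apply]
      _ = e.label (e⁻¹.apply (y :: u)) * e⁻¹.label (y :: u) := by
          rw [hw, hf.apply_fix hzx, hf.2 z v hzx, one_mul]
      _ = (e * e⁻¹).label (y :: u) := (TreeAut.mul_label _ _ _).symm
      _ = 1 := by rw [mul_inv_cancel, TreeAut.one_label]

lemma betaAut_suppAt (s i : ℕ) (hi : i ≠ 0) (g : TreeAut m) :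
    SuppAt 0 (betaAut s i g) := by
  refine ⟨betaAut_label_nil_of_ne s i hi g, fun y u hy => ?_⟩
  rw [betaAut_label, betaLabel_cons_ne s i hi, if_neg hy]

lemma betaAut_mem_basilica {s i : ℕ} (hi : i < s) {G : Subgroup (TreeAut m)}
    {g : TreeAut m} (hg : g ∈ G) : betaAut s i g ∈ basilica s G :=
  Subgroup.subset_closure ⟨g, hg, i, hi, rfl⟩

lemma betaAut_mem_Ssub {s i j : ℕ} (hj : j < s) (hji : j ≠ i) {G : Subgroup (TreeAut m)}
    {g : TreeAut m} (hg : g ∈ G) : betaAut s j g ∈ Ssub s i G :=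
  Subgroup.subset_closure ⟨g, hg, j, hj, hji, rfl⟩

lemma Ssub_le_Nsub (s i : ℕ) (G : Subgroup (TreeAut m)) : Ssub s i G ≤ Nsub s i G := by
  rw [Ssub, Subgroup.closure_le]
  intro y hy
  exact Subgroup.subset_closure ⟨1, one_mem _, y, Subgroup.subset_closure hy, by group⟩

lemma conj_mem_Nsub {s i : ℕ} {G : Subgroup (TreeAut m)} {b n : TreeAut m}
    (hb : b ∈ basilica s G) (hn : n ∈ Nsub s i G) : b * n * b⁻¹ ∈ Nsub s i G := by
  induction hn using Subgroup.closure_induction with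
  | mem x hx =>
      obtain ⟨c, hc, y, hy, rfl⟩ := hx
      have : b * (c * y * c⁻¹) * b⁻¹ = (b * c) * y * (b * c)⁻¹ := by group
      rw [this]
      exact Subgroup.subset_closure ⟨b * c, mul_mem hb hc, y, hy, rfl⟩
  | one => rw [mul_one, mul_inv_cancel]; exact one_mem _
  | mul x y hx hy ihx ihy =>
      have : b * (x * y) * b⁻¹ = (b * x * b⁻¹) * (b * y * b⁻¹) := by group
      rw [this]; exact mul_mem ihx ihy
  | inv x hx ih =>
      have : b * x⁻¹ * b⁻¹ = (b * x * b⁻¹)⁻¹ := by group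
      rw [this]; exact inv_mem ih

lemma commutator_mem_Nsub {s i : ℕ} (hi1 : 1 ≤ i) (his : i < s)
    {G : Subgroup (TreeAut m)} {a : TreeAut m} (ha : a ∈ G) (ha0 : a.label [] 0 ≠ 0)
    {g h : TreeAut m} (hg : g ∈ G) (hh : h ∈ G) :
    ⁅betaAut s i g, betaAut s i h⁆ ∈ Nsub s i G := by
  have hi0 : i ≠ 0 := by omega
  set b := betaAut s 0 a with hbdef
  set k := betaAut s i g with hkdef
  set l := betaAut s i h with hldef
  have hbB : b ∈ basilica s G := betaAut_mem_basilica (by omega) ha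
  have hbN : b ∈ Nsub s i G :=
    Ssub_le_Nsub _ _ _ (betaAut_mem_Ssub (by omega) (by omega) ha)
  have hkB : k ∈ basilica s G := betaAut_mem_basilica his hg
  have hlB : l ∈ basilica s G := betaAut_mem_basilica his hh
  have hblab : b.label [] = a.label [] := betaAut_label_nil_zero s a
  have hconj : SuppAt (b.label [] 0) (b * k * b⁻¹) := (betaAut_suppAt s i hi0 g).conj b
  have hcomm : (b * k * b⁻¹) * l = l * (b * k * b⁻¹) :=
    SuppAt.commute (by rw [hblab]; exact ha0) hconj (betaAut_suppAt s i hi0 h)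
  set d := k * b * k⁻¹ * b⁻¹ with hddef
  have hdN : d ∈ Nsub s i G := mul_mem (conj_mem_Nsub hkB hbN) (inv_mem hbN)
  set c := b * k * b⁻¹ with hcdef
  have hclc : c * l * c⁻¹ = l := by rw [hcomm]; group
  have hk : ⁅k, l⁆ = d * l * d⁻¹ * l⁻¹ := by
    have hdk : k = d * c := by rw [hddef, hcdef]; group
    rw [commutatorElement_def]
    calc k * l * k⁻¹ * l⁻¹ = (d * c) * l * (d * c)⁻¹ * l⁻¹ := by rw [← hdk]
      _ = d * (c * l * c⁻¹) * d⁻¹ * l⁻¹ := by group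
      _ = d * l * d⁻¹ * l⁻¹ := by rw [hclc]
  rw [hk]
  have : d * l * d⁻¹ * l⁻¹ = d * (l * d⁻¹ * l⁻¹) := by group
  rw [this]
  exact mul_mem hdN (conj_mem_Nsub hlB (inv_mem hdN))

end Statement8Aux

/-- Let `s ≥ 1` and let `G ≤ Aut(T)` not stabilise the vertex `0`.
Then `β_i([G,G]) ≤ N_i` for all `i ∈ {1, …, s-1}`; in particular, if `s > 1` and `G` is
`s`-split, then `G` is abelian. -/
theorem beta_commutator_le_Nsub {m : ℕ} [NeZero m] (hm : 2 ≤ m)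
    (s : ℕ) (hs : 1 ≤ s) (G : Subgroup (TreeAut m))
    (hG : ∃ g ∈ G, g.apply [(0 : Fin m)] ≠ [(0 : Fin m)]) :
    (∀ i, 1 ≤ i → i < s → ∀ x ∈ ⁅G, G⁆, betaAut s i x ∈ Nsub s i G) ∧
    (1 < s → (∀ i < s, ∀ g ∈ Kset s i G, g = 1) →
      ∀ g ∈ G, ∀ h ∈ G, g * h = h * g) := by
  obtain ⟨a, haG, ha0'⟩ := hG
  have ha0 : a.label [] 0 ≠ 0 := by
    intro hcon
    apply ha0'
    rw [TreeAut.apply_cons, hcon, TreeAut.apply_nil]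
  have main : ∀ i, 1 ≤ i → i < s → ∀ x ∈ ⁅G, G⁆, betaAut s i x ∈ Nsub s i G := by
    intro i hi1 his x hx
    have hle : ⁅G, G⁆ ≤ Subgroup.comap (betaHom s i) (Nsub s i G) := by
      rw [Subgroup.commutator_le]
      intro g hg h hh
      show betaHom s i ⁅g, h⁆ ∈ Nsub s i G
      rw [map_commutatorElement]
      exact commutator_mem_Nsub hi1 his haG ha0 hg hh
    exact hle hx
  refine ⟨main, fun hs1 hK g hg h hh => ?_⟩
  have hmem : ⁅g, h⁆ ∈ Kset s 1 G := by
    refine ⟨?_, main 1 le_rfl hs1 _ (Subgroup.commutator_mem_commutator hg hh)⟩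
    exact mul_mem (mul_mem (mul_mem hg hh) (inv_mem hg)) (inv_mem hh)
  exact commutatorElement_eq_one_iff_mul_comm.mp (hK 1 hs1 _ hmem)

end Basilica
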